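/- Expected approximation error bound: under the Lipschitz log conditional density assumption, for 0 < h < 1/L and any measurable f, 0 ≤ E[ℓ̂ᵇ_h(f(X),Y) − ℓ(f(X),Y)] ≤ (e−1)·B·L·h, where ℓ(t,y) = yᵀπ̂(t) and ℓ̂ᵇ_h(t,y) = (V(t) − V(t−hy))/h. -/

import Mathlib

open scoped RealInnerProductSpace
open MeasureTheory

set_option maxHeartbeats 1000000

noncomputable def plugV {d : ℕ} (Z : Set (EuclideanSpace ℝ (Fin d)))
    (t : EuclideanSpace ℝ (Fin d)) : ℝ :=
  sInf ((fun z => (inner ℝ (t) (z) : ℝ)) '' Z)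

section Aux

lemma exp_le_one_add_mul {x : ℝ} (h0 : 0 ≤ x) (h1 : x ≤ 1) :
    Real.exp x ≤ 1 + (Real.exp 1 - 1) * x := by
  have := convexOn_exp.2 (Set.mem_univ (0:ℝ)) (Set.mem_univ (1:ℝ))
    (by linarith : (0:ℝ) ≤ 1 - x) h0 (by ring)
  simp only [smul_eq_mul, mul_zero, mul_one, zero_add, Real.exp_zero] at this
  nlinarith [this]

/-- clip to the unit ball -/
noncomputable def clipUnit {d : ℕ} (y : EuclideanSpace ℝ (Fin d)) :
    EuclideanSpace ℝ (Fin d) := (max 1 ‖y‖)⁻¹ • y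

lemma clipUnit_norm_le {d : ℕ} (y : EuclideanSpace ℝ (Fin d)) : ‖clipUnit y‖ ≤ 1 := by
  have h1 : (0:ℝ) < max 1 ‖y‖ := lt_max_of_lt_left one_pos
  have h2 : ‖y‖ ≤ max 1 ‖y‖ := le_max_right _ _
  rw [clipUnit, norm_smul, norm_inv, Real.norm_of_nonneg h1.le]
  rw [inv_mul_le_iff₀ h1, mul_one]
  exact h2

lemma clipUnit_eq {d : ℕ} {y : EuclideanSpace ℝ (Fin d)} (h : ‖y‖ ≤ 1) :
    clipUnit y = y := by
  rw [clipUnit, max_eq_left h, inv_one, one_smul]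

lemma continuous_clipUnit {d : ℕ} : Continuous (clipUnit (d := d)) := by
  show Continuous (fun y : EuclideanSpace ℝ (Fin d) => (max 1 ‖y‖)⁻¹ • y)
  refine Continuous.smul (f := fun y : EuclideanSpace ℝ (Fin d) => (max 1 ‖y‖)⁻¹) ?_ continuous_id
  exact (continuous_const.max continuous_norm).inv₀
    (fun y => ne_of_gt (lt_max_of_lt_left one_pos))

lemma measurable_clipUnit {d : ℕ} : Measurable (clipUnit (d := d)) :=
  continuous_clipUnit.measurable

end Aux

theorem expected_approximation_error {d : ℕ}
    {Ω : Type*} [MeasurableSpace Ω] (μ : Measure Ω) [IsProbabilityMeasure μ]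
    {α : Type*} [MeasurableSpace α]
    (Z : Set (EuclideanSpace ℝ (Fin d))) (hne : Z.Nonempty) (hc : IsCompact Z)
    (B L h : ℝ) (hB : 0 ≤ B) (hZB : ∀ z ∈ Z, ‖z‖ ≤ B)
    (hL : 0 < L) (hh : 0 < h) (hhL : h < 1 / L)
    (X : Ω → α) (hX : Measurable X)
    (Y : Ω → EuclideanSpace ℝ (Fin d)) (hY : Measurable Y)
    (hYbdd : ∀ᵐ ω ∂μ, ‖Y ω‖ ≤ 1)
    (f : α → EuclideanSpace ℝ (Fin d)) (hf : Measurable f)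
    (piHat : EuclideanSpace ℝ (Fin d) → EuclideanSpace ℝ (Fin d))
    (hpiMeas : Measurable piHat)
    (hpiSel : ∀ t, piHat t ∈ Z ∧ ∀ z ∈ Z, (inner ℝ (t) (piHat t) : ℝ) ≤ (inner ℝ (t) (z) : ℝ))
    -- g t y is the conditional density of f(X) given Y = y
    (g : EuclideanSpace ℝ (Fin d) → EuclideanSpace ℝ (Fin d) → ℝ)
    (hgMeas : Measurable (Function.uncurry g))
    (hgPos : ∀ t y, 0 < g t y)
    (hgLip : ∀ y t t', |Real.log (g t' y) - Real.log (g t y)| ≤ L * ‖t' - t‖)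
    (hdens : ∀ ψ : EuclideanSpace ℝ (Fin d) → EuclideanSpace ℝ (Fin d) → ℝ,
      Measurable (Function.uncurry ψ) → (∃ C, ∀ t y, |ψ t y| ≤ C) →
      ∫ ω, ψ (f (X ω)) (Y ω) ∂μ = ∫ ω, (∫ t, ψ t (Y ω) * g t (Y ω)) ∂μ) :
    0 ≤ ∫ ω, ((plugV Z (f (X ω)) - plugV Z (f (X ω) - h • Y ω)) / h
          - (inner ℝ (Y ω) (piHat (f (X ω))) : ℝ)) ∂μ ∧
    ∫ ω, ((plugV Z (f (X ω)) - plugV Z (f (X ω) - h • Y ω)) / h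
          - (inner ℝ (Y ω) (piHat (f (X ω))) : ℝ)) ∂μ ≤ (Real.exp 1 - 1) * B * L * h := by
  -- norm bound on piHat
  have hpiB : ∀ t : (EuclideanSpace ℝ (Fin d)), ‖piHat t‖ ≤ B := fun t => hZB _ (hpiSel t).1
  -- basic facts about plugV
  have hbdd : ∀ t : (EuclideanSpace ℝ (Fin d)), BddBelow ((fun z => (inner ℝ t z : ℝ)) '' Z) := by
    intro t
    refine ⟨-(‖t‖ * B), ?_⟩
    rintro w ⟨z, hz, rfl⟩
    have h1 : |(inner ℝ t z : ℝ)| ≤ ‖t‖ * ‖z‖ := abs_real_inner_le_norm t z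
    have h2 : ‖t‖ * ‖z‖ ≤ ‖t‖ * B := by
      apply mul_le_mul_of_nonneg_left (hZB z hz) (norm_nonneg t)
    have := abs_le.1 h1
    linarith [this.1]
  have hVle : ∀ (t : (EuclideanSpace ℝ (Fin d))), ∀ z ∈ Z, plugV Z t ≤ (inner ℝ t z : ℝ) := by
    intro t z hz
    exact csInf_le (hbdd t) ⟨z, hz, rfl⟩
  have hVeq : ∀ t : (EuclideanSpace ℝ (Fin d)), plugV Z t = (inner ℝ t (piHat t) : ℝ) := by
    intro t
    refine le_antisymm (hVle t _ (hpiSel t).1) ?_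
    refine le_csInf (hne.image _) ?_
    rintro w ⟨z, hz, rfl⟩
    exact (hpiSel t).2 z hz
  -- the integrand
  set I : Ω → ℝ := fun ω => ((plugV Z (f (X ω)) - plugV Z (f (X ω) - h • Y ω)) / h
          - (inner ℝ (Y ω) (piHat (f (X ω))) : ℝ)) with hI
  -- pointwise lower bound
  have hlow : ∀ (t y : (EuclideanSpace ℝ (Fin d))), 0 ≤ (plugV Z t - plugV Z (t - h • y)) / h - (inner ℝ y (piHat t) : ℝ) := by
    intro t y
    have h1 : plugV Z (t - h • y) ≤ (inner ℝ (t - h • y) (piHat t) : ℝ) :=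
      hVle _ _ (hpiSel t).1
    have h2 : (inner ℝ (t - h • y) (piHat t) : ℝ)
        = plugV Z t - h * (inner ℝ y (piHat t) : ℝ) := by
      rw [hVeq t, inner_sub_left, real_inner_smul_left]
    rw [sub_nonneg, le_div_iff₀ hh, mul_comm]
    linarith
  -- pointwise upper bound
  have hup : ∀ (t y : (EuclideanSpace ℝ (Fin d))), (plugV Z t - plugV Z (t - h • y)) / h - (inner ℝ y (piHat t) : ℝ)
      ≤ (inner ℝ y (piHat (t - h • y)) : ℝ) - (inner ℝ y (piHat t) : ℝ) := by
    intro t y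
    have h1 : plugV Z t ≤ (inner ℝ t (piHat (t - h • y)) : ℝ) :=
      hVle _ _ (hpiSel (t - h • y)).1
    have h2 : (inner ℝ t (piHat (t - h • y)) : ℝ)
        = plugV Z (t - h • y) + h * (inner ℝ y (piHat (t - h • y)) : ℝ) := by
      rw [hVeq (t - h • y)]
      have : (inner ℝ (t - h•y) (piHat (t - h•y)) : ℝ)
          = (inner ℝ t (piHat (t - h•y)) : ℝ) - h * (inner ℝ y (piHat (t - h•y)) : ℝ) := by
        rw [inner_sub_left, real_inner_smul_left]
      rw [this]; ring
    have h3 : (plugV Z t - plugV Z (t - h • y)) / h ≤ (inner ℝ y (piHat (t - h • y)) : ℝ) := by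
      rw [div_le_iff₀ hh, mul_comm]
      linarith
    linarith
  -- test functions
  set ψ₁ : (EuclideanSpace ℝ (Fin d)) → (EuclideanSpace ℝ (Fin d)) → ℝ := fun t y => (inner ℝ (clipUnit y) (piHat (t - h • clipUnit y)) : ℝ) with hψ₁
  set ψ₂ : (EuclideanSpace ℝ (Fin d)) → (EuclideanSpace ℝ (Fin d)) → ℝ := fun t y => (inner ℝ (clipUnit y) (piHat t) : ℝ) with hψ₂
  have hψbound : ∀ (q : (EuclideanSpace ℝ (Fin d))) (t : (EuclideanSpace ℝ (Fin d))), |(inner ℝ (clipUnit q) (piHat t) : ℝ)| ≤ B := by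
    intro q t
    refine (abs_real_inner_le_norm _ _).trans ?_
    calc ‖clipUnit q‖ * ‖piHat t‖ ≤ 1 * B :=
          mul_le_mul (clipUnit_norm_le q) (hpiB t) (norm_nonneg _) zero_le_one
      _ = B := one_mul B
  have hψ₁meas : Measurable (Function.uncurry ψ₁) := by
    apply Measurable.inner
    · exact measurable_clipUnit.comp measurable_snd
    · exact hpiMeas.comp ((measurable_fst.sub ((measurable_clipUnit.comp measurable_snd).const_smul h)))
  have hψ₂meas : Measurable (Function.uncurry ψ₂) := by
    apply Measurable.inner
    · exact measurable_clipUnit.comp measurable_snd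
    · exact hpiMeas.comp measurable_fst
  have hψ₁bdd : ∀ t y, |ψ₁ t y| ≤ B := fun t y => hψbound y _
  have hψ₂bdd : ∀ t y, |ψ₂ t y| ≤ B := fun t y => hψbound y _
  -- measurability of the integrand
  have hImeas : Measurable I := by
    have hIeq : I = fun ω => ((inner ℝ (f (X ω)) (piHat (f (X ω))) : ℝ)
        - (inner ℝ (f (X ω) - h • Y ω) (piHat (f (X ω) - h • Y ω)) : ℝ)) / h
        - (inner ℝ (Y ω) (piHat (f (X ω))) : ℝ) := by
      funext ω; rw [hI]; simp only [hVeq]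
    rw [hIeq]
    have hfx : Measurable fun ω => f (X ω) := hf.comp hX
    have hsub : Measurable fun ω => f (X ω) - h • Y ω := hfx.sub (hY.const_smul h)
    exact (((hfx.inner (hpiMeas.comp hfx)).sub
      (hsub.inner (hpiMeas.comp hsub))).div_const h).sub (hY.inner (hpiMeas.comp hfx))
  -- Part 1
  have part1 : 0 ≤ ∫ ω, I ω ∂μ := integral_nonneg (fun ω => hlow _ _)
  refine ⟨part1, ?_⟩
  -- a.e. bound by φ
  have hIle : ∀ᵐ ω ∂μ, I ω ≤ ψ₁ (f (X ω)) (Y ω) - ψ₂ (f (X ω)) (Y ω) := by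
    filter_upwards [hYbdd] with ω hω
    have := hup (f (X ω)) (Y ω)
    simp only [hψ₁, hψ₂, clipUnit_eq hω]
    exact this
  -- integrability of I
  have hIint : Integrable I μ := by
    refine Integrable.mono' (integrable_const (2*B)) hImeas.aestronglyMeasurable ?_
    filter_upwards [hIle] with ω hω
    simp only [hI] at hω
    rw [Real.norm_of_nonneg (hlow _ _)]
    have b1 : |ψ₁ (f (X ω)) (Y ω)| ≤ B := hψ₁bdd _ _
    have b2 : |ψ₂ (f (X ω)) (Y ω)| ≤ B := hψ₂bdd _ _
    have := abs_le.1 b1; have := abs_le.1 b2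
    linarith [hω, (abs_le.1 b1).2, (abs_le.1 b2).1]
  -- integrability of composed test functions
  have hcompint : ∀ (ψ : (EuclideanSpace ℝ (Fin d)) → (EuclideanSpace ℝ (Fin d)) → ℝ), Measurable (Function.uncurry ψ) → (∀ t y, |ψ t y| ≤ B)
      → Integrable (fun ω => ψ (f (X ω)) (Y ω)) μ := by
    intro ψ hm hb
    refine Integrable.mono' (integrable_const B) ?_ (ae_of_all _ fun ω => ?_)
    · exact (hm.comp ((hf.comp hX).prodMk hY)).aestronglyMeasurable
    · rw [Real.norm_eq_abs]; exact hb _ _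
  have hψ₁int : Integrable (fun ω => ψ₁ (f (X ω)) (Y ω)) μ := hcompint ψ₁ hψ₁meas hψ₁bdd
  have hψ₂int : Integrable (fun ω => ψ₂ (f (X ω)) (Y ω)) μ := hcompint ψ₂ hψ₂meas hψ₂bdd
  -- step 1 : ∫ I ≤ ∫ ψ₁∘ - ψ₂∘
  have step1 : ∫ ω, I ω ∂μ ≤ ∫ ω, (ψ₁ (f (X ω)) (Y ω) - ψ₂ (f (X ω)) (Y ω)) ∂μ :=
    integral_mono_ae hIint (hψ₁int.sub hψ₂int) hIle
  -- the G function
  set G : Ω → ℝ := fun ω => ∫ t, g t (Y ω) with hG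
  have hslicemeas : ∀ y : (EuclideanSpace ℝ (Fin d)), Measurable (fun t => g t y) := by
    intro y
    exact hgMeas.comp (measurable_id.prodMk measurable_const)
  have hGnn : ∀ ω, 0 ≤ G ω := fun ω => integral_nonneg (fun t => (hgPos t _).le)
  -- measurability of parametric integrals
  have hparam : ∀ (ρ : (EuclideanSpace ℝ (Fin d)) → (EuclideanSpace ℝ (Fin d)) → ℝ), Measurable (Function.uncurry ρ) →
      Measurable (fun ω => ∫ t, ρ t (Y ω)) := by
    intro ρ hρ
    have h1 : StronglyMeasurable (Function.uncurry (fun y t => ρ t y)) := by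
      have : Function.uncurry (fun (y:(EuclideanSpace ℝ (Fin d))) (t:(EuclideanSpace ℝ (Fin d))) => ρ t y)
          = (Function.uncurry ρ) ∘ Prod.swap := by rfl
      rw [this]
      exact (hρ.comp measurable_swap).stronglyMeasurable
    have h2 : StronglyMeasurable (fun y : (EuclideanSpace ℝ (Fin d)) => ∫ t, ρ t y) :=
      StronglyMeasurable.integral_prod_right h1
    exact h2.measurable.comp hY
  have hGmeas : Measurable G := hparam g hgMeas
  -- ∫ G = 1
  have hGone : ∫ ω, G ω ∂μ = 1 := by
    have := hdens (fun _ _ => (1:ℝ)) measurable_const ⟨1, fun t y => by norm_num⟩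
    simp only [one_mul] at this
    rw [← this]
    simp
  have hGint : Integrable G μ := by
    by_contra hcon
    rw [integral_undef hcon] at hGone
    norm_num at hGone
  -- a.e. integrability of the density slices
  have haeint : ∀ᵐ ω ∂μ, Integrable (fun t => g t (Y ω)) := by
    set s : ℕ → Set (EuclideanSpace ℝ (Fin d)) := fun n => Metric.closedBall 0 n with hs
    have hsm : ∀ n, MeasurableSet (s n) := fun n => measurableSet_closedBall
    have hsmono : ∀ {n m : ℕ}, n ≤ m → s n ⊆ s m := fun {n m} hnm =>
      Metric.closedBall_subset_closedBall (Nat.cast_le.2 hnm)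
    -- g is bounded on each ball
    have hgb : ∀ (y : EuclideanSpace ℝ (Fin d)) (n : ℕ), ∀ t ∈ s n,
        g t y ≤ g 0 y * Real.exp (L * n) := by
      intro y n t ht
      have hlog := abs_le.1 (hgLip y 0 t)
      have h1 : Real.log (g t y) ≤ Real.log (g 0 y) + L * ‖t‖ := by
        have := hlog.2
        rw [sub_zero] at this
        linarith
      have h2 : ‖t‖ ≤ (n : ℝ) := mem_closedBall_zero_iff.1 ht
      calc g t y = Real.exp (Real.log (g t y)) := (Real.exp_log (hgPos t y)).symm
        _ ≤ Real.exp (Real.log (g 0 y) + L * n) := by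
            refine Real.exp_le_exp.2 ?_
            have := mul_le_mul_of_nonneg_left h2 hL.le
            linarith
        _ = g 0 y * Real.exp (L * n) := by
            rw [Real.exp_add, Real.exp_log (hgPos 0 y)]
    -- integrability on each ball
    have hIntBall : ∀ (y : EuclideanSpace ℝ (Fin d)) (n : ℕ),
        IntegrableOn (fun t => g t y) (s n) := by
      intro y n
      refine Integrable.mono'
        (integrableOn_const (C := g 0 y * Real.exp (L * n))
          measure_closedBall_lt_top.ne)
        ((hslicemeas y).aestronglyMeasurable.restrict) ?_
      refine (ae_restrict_iff' (hsm n)).2 (ae_of_all _ fun t ht => ?_)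
      rw [Real.norm_of_nonneg (hgPos t y).le]
      exact hgb y n t ht
    -- the preimage sets
    set pe : ℕ → Set Ω := fun n => (fun ω => f (X ω)) ⁻¹' s n with hpe
    have hpem : ∀ n, MeasurableSet (pe n) := fun n => (hf.comp hX) (hsm n)
    -- hdens applied to the indicator functions
    have hdn : ∀ n : ℕ, (μ (pe n)).toReal = ∫ ω, (∫ t in s n, g t (Y ω)) ∂μ := by
      intro n
      have hmeasn : Measurable (Function.uncurry
          (fun (t _y : EuclideanSpace ℝ (Fin d)) => (s n).indicator (fun _ => (1:ℝ)) t)) :=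
        (measurable_const.indicator (hsm n)).comp measurable_fst
      have hbddn : ∃ C, ∀ t y : EuclideanSpace ℝ (Fin d),
          |(s n).indicator (fun _ => (1:ℝ)) t| ≤ C := by
        refine ⟨1, fun t y => ?_⟩
        by_cases hm : t ∈ s n <;>
          simp [Set.indicator_of_mem, Set.indicator_of_notMem, hm]
      have := hdens _ hmeasn hbddn
      have hL1 : ∫ ω, (s n).indicator (fun _ => (1:ℝ)) (f (X ω)) ∂μ = (μ (pe n)).toReal := by
        have heq : (fun ω => (s n).indicator (fun _ => (1:ℝ)) (f (X ω)))
            = (pe n).indicator (1 : Ω → ℝ) := by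
          funext ω
          by_cases hm : f (X ω) ∈ s n
          · rw [Set.indicator_of_mem hm, Set.indicator_of_mem (by exact hm : ω ∈ pe n)]
            rfl
          · rw [Set.indicator_of_notMem hm,
              Set.indicator_of_notMem (by exact hm : ω ∉ pe n)]
        rw [heq, integral_indicator_one (hpem n)]
        rfl
      have hR1 : ∀ ω, (∫ t, (s n).indicator (fun _ => (1:ℝ)) t * g t (Y ω))
          = ∫ t in s n, g t (Y ω) := by
        intro ω
        have heq : (fun t => (s n).indicator (fun _ => (1:ℝ)) t * g t (Y ω))
            = (s n).indicator (fun t => g t (Y ω)) := by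
          funext t
          by_cases hm : t ∈ s n
          · rw [Set.indicator_of_mem hm, Set.indicator_of_mem hm, one_mul]
          · rw [Set.indicator_of_notMem hm, Set.indicator_of_notMem hm, zero_mul]
        rw [heq, integral_indicator (hsm n)]
      rw [← hL1, this]
      congr 1
      funext ω
      exact hR1 ω
    -- there exists a ball with positive mass
    have hpos : ∃ n₀ : ℕ, 0 < μ (pe n₀) := by
      by_contra hcon
      push_neg at hcon
      have hzero : ∀ n, μ (pe n) = 0 := fun n => le_antisymm (hcon n) zero_le
      have hcup : ⋃ n, pe n = Set.univ := by
        refine Set.eq_univ_of_forall fun ω => ?_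
        obtain ⟨n, hn⟩ := exists_nat_ge ‖f (X ω)‖
        exact Set.mem_iUnion.2 ⟨n, mem_closedBall_zero_iff.2 hn⟩
      have : μ Set.univ ≤ ∑' n, μ (pe n) := hcup ▸ measure_iUnion_le pe
      simp [hzero, measure_univ] at this
    obtain ⟨n₀, hn₀⟩ := hpos
    -- the truncated lintegrals
    set Hn : ℕ → Ω → ENNReal := fun n ω => ∫⁻ t in s n, ENNReal.ofReal (g t (Y ω)) with hHn
    have hHnmeas : ∀ n, Measurable (Hn n) := by
      intro n
      have h1 : Measurable (Function.uncurry
          (fun (y t : EuclideanSpace ℝ (Fin d)) => ENNReal.ofReal (g t y))) :=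
        ENNReal.measurable_ofReal.comp (hgMeas.comp measurable_swap)
      exact (Measurable.lintegral_prod_right (ν := volume.restrict (s n)) h1).comp hY
    have hHnmono : ∀ (ω : Ω), Monotone fun n => Hn n ω := by
      intro ω n m hnm
      exact lintegral_mono_set (hsmono hnm)
    have hHnfin : ∀ n ω, Hn n ω < ⊤ := by
      intro n ω
      exact (hasFiniteIntegral_iff_ofReal
        (ae_of_all _ fun t => (hgPos t (Y ω)).le)).1 (hIntBall (Y ω) n).2
    -- the integral identities as lintegrals, for large n
    have hlint : ∀ n, n₀ ≤ n → ∫⁻ ω, Hn n ω ∂μ ≤ 1 := by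
      intro n hn
      set In : Ω → ℝ := fun ω => ∫ t in s n, g t (Y ω) with hIn
      have hμn : 0 < μ (pe n) :=
        lt_of_lt_of_le hn₀ (measure_mono fun ω hω => hsmono hn hω)
      have hposn : 0 < (μ (pe n)).toReal :=
        ENNReal.toReal_pos hμn.ne' (measure_ne_top μ _)
      have hInint : Integrable In μ := by
        by_contra hcon
        rw [hdn n, integral_undef hcon] at hposn
        exact lt_irrefl _ hposn
      have hInnn : 0 ≤ᶠ[ae μ] In :=
        ae_of_all _ fun ω => integral_nonneg fun t => (hgPos t (Y ω)).le
      have h1 : ENNReal.ofReal (∫ ω, In ω ∂μ) = ∫⁻ ω, ENNReal.ofReal (In ω) ∂μ :=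
        ofReal_integral_eq_lintegral_ofReal hInint hInnn
      have h2 : ∀ ω, ENNReal.ofReal (In ω) = Hn n ω := fun ω =>
        ofReal_integral_eq_lintegral_ofReal (hIntBall (Y ω) n)
          (ae_of_all _ fun t => (hgPos t (Y ω)).le)
      have h3 : ∫⁻ ω, Hn n ω ∂μ = ENNReal.ofReal ((μ (pe n)).toReal) := by
        calc ∫⁻ ω, Hn n ω ∂μ = ∫⁻ ω, ENNReal.ofReal (In ω) ∂μ :=
              lintegral_congr fun ω => (h2 ω).symm
          _ = ENNReal.ofReal (∫ ω, In ω ∂μ) := h1.symm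
          _ = ENNReal.ofReal ((μ (pe n)).toReal) :=
              congrArg ENNReal.ofReal (hdn n).symm
      rw [h3]
      calc ENNReal.ofReal ((μ (pe n)).toReal) ≤ μ (pe n) := ENNReal.ofReal_toReal_le
        _ ≤ 1 := prob_le_one
    -- the full lintegral
    set H : Ω → ENNReal := fun ω => ∫⁻ t, ENNReal.ofReal (g t (Y ω)) with hH
    have hHmeas : Measurable H := by
      have h1 : Measurable (Function.uncurry
          (fun (y t : EuclideanSpace ℝ (Fin d)) => ENNReal.ofReal (g t y))) :=
        ENNReal.measurable_ofReal.comp (hgMeas.comp measurable_swap)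
      exact (Measurable.lintegral_prod_right (ν := volume) h1).comp hY
    have hHsup : ∀ ω, H ω = ⨆ n, Hn n ω := by
      intro ω
      have hfneq : ∀ t : EuclideanSpace ℝ (Fin d),
          (⨆ n, (s n).indicator (fun t => ENNReal.ofReal (g t (Y ω))) t)
          = ENNReal.ofReal (g t (Y ω)) := by
        intro t
        refine le_antisymm (iSup_le fun n => Set.indicator_le_self _ _ t) ?_
        obtain ⟨n, hn⟩ := exists_nat_ge ‖t‖
        refine le_iSup_of_le n ?_
        rw [Set.indicator_of_mem (mem_closedBall_zero_iff.2 hn)]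
      have hmeasind : ∀ n, Measurable
          ((s n).indicator (fun t => ENNReal.ofReal (g t (Y ω)))) := fun n =>
        (ENNReal.measurable_ofReal.comp (hslicemeas (Y ω))).indicator (hsm n)
      have hmonoind : Monotone
          (fun n => (s n).indicator (fun t => ENNReal.ofReal (g t (Y ω)))) :=
        fun n m hnm => Set.indicator_le_indicator_of_subset (hsmono hnm)
          (fun _ => zero_le)
      calc H ω = ∫⁻ t, ⨆ n, (s n).indicator (fun t => ENNReal.ofReal (g t (Y ω))) t := by
            rw [hH]
            exact (lintegral_congr fun t => (hfneq t).symm)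
        _ = ⨆ n, ∫⁻ t, (s n).indicator (fun t => ENNReal.ofReal (g t (Y ω))) t :=
            lintegral_iSup hmeasind hmonoind
        _ = ⨆ n, Hn n ω := by
            congr 1
            funext n
            exact lintegral_indicator (hsm n) _
    have hHle : ∫⁻ ω, H ω ∂μ ≤ 1 := by
      have h1 : ∫⁻ ω, H ω ∂μ = ⨆ n, ∫⁻ ω, Hn n ω ∂μ := by
        rw [lintegral_congr hHsup]
        exact lintegral_iSup hHnmeas (fun n m hnm ω => hHnmono ω hnm)
      rw [h1]
      refine iSup_le fun n => ?_
      calc ∫⁻ ω, Hn n ω ∂μ ≤ ∫⁻ ω, Hn (max n n₀) ω ∂μ :=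
            lintegral_mono fun ω => hHnmono ω (le_max_left n n₀)
        _ ≤ 1 := hlint _ (le_max_right n n₀)
    have hHae : ∀ᵐ ω ∂μ, H ω < ⊤ :=
      ae_lt_top hHmeas (by
        intro hcon
        rw [hcon] at hHle
        exact absurd hHle (by simp))
    filter_upwards [hHae] with ω hω
    refine ⟨(hslicemeas (Y ω)).aestronglyMeasurable, ?_⟩
    rw [hasFiniteIntegral_iff_ofReal (ae_of_all _ fun t => (hgPos t (Y ω)).le)]
    exact hω
  -- apply hdens to ψ₁ and ψ₂
  set ι₁ : Ω → ℝ := fun ω => ∫ t, ψ₁ t (Y ω) * g t (Y ω) with hι₁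
  set ι₂ : Ω → ℝ := fun ω => ∫ t, ψ₂ t (Y ω) * g t (Y ω) with hι₂
  have hd₁ : ∫ ω, ψ₁ (f (X ω)) (Y ω) ∂μ = ∫ ω, ι₁ ω ∂μ :=
    hdens ψ₁ hψ₁meas ⟨B, hψ₁bdd⟩
  have hd₂ : ∫ ω, ψ₂ (f (X ω)) (Y ω) ∂μ = ∫ ω, ι₂ ω ∂μ :=
    hdens ψ₂ hψ₂meas ⟨B, hψ₂bdd⟩
  -- measurability of ι's
  have hι₁meas : Measurable ι₁ :=
    hparam (fun t y => ψ₁ t y * g t y) (hψ₁meas.mul hgMeas)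
  have hι₂meas : Measurable ι₂ :=
    hparam (fun t y => ψ₂ t y * g t y) (hψ₂meas.mul hgMeas)
  -- a.e. bounds |ιᵢ| ≤ B * G
  have hιbound : ∀ (ψ : (EuclideanSpace ℝ (Fin d)) → (EuclideanSpace ℝ (Fin d)) → ℝ), Measurable (Function.uncurry ψ) → (∀ t y, |ψ t y| ≤ B) →
      ∀ᵐ ω ∂μ, |∫ t, ψ t (Y ω) * g t (Y ω)| ≤ B * G ω := by
    intro ψ hm hb
    filter_upwards [haeint] with ω hint
    have hsm : Measurable fun t => ψ t (Y ω) * g t (Y ω) :=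
      (hm.comp (measurable_id.prodMk measurable_const)).mul (hslicemeas _)
    have hBg : Integrable (fun t => B * g t (Y ω)) := hint.const_mul B
    have hψgint : Integrable (fun t => ψ t (Y ω) * g t (Y ω)) := by
      refine Integrable.mono' hBg hsm.aestronglyMeasurable (ae_of_all _ fun t => ?_)
      rw [Real.norm_eq_abs, abs_mul, abs_of_pos (hgPos t _)]
      exact mul_le_mul_of_nonneg_right (hb t _) (hgPos t _).le
    have habs : Integrable (fun t => |ψ t (Y ω)| * |g t (Y ω)|) := by
      simpa [abs_mul] using hψgint.abs
    calc |∫ t, ψ t (Y ω) * g t (Y ω)| ≤ ∫ t, |ψ t (Y ω)| * |g t (Y ω)| := by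
          simpa [Real.norm_eq_abs, abs_mul] using
            norm_integral_le_integral_norm (μ := volume) (fun t => ψ t (Y ω) * g t (Y ω))
      _ ≤ ∫ t, B * g t (Y ω) := by
          refine integral_mono habs hBg (fun t => ?_)
          rw [abs_of_pos (hgPos t _)]
          exact mul_le_mul_of_nonneg_right (hb t _) (hgPos t _).le
      _ = B * G ω := by rw [hG, integral_const_mul]
  have hι₁int : Integrable ι₁ μ := by
    refine Integrable.mono' (hGint.const_mul B) hι₁meas.aestronglyMeasurable ?_
    filter_upwards [hιbound ψ₁ hψ₁meas hψ₁bdd] with ω hω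
    rwa [Real.norm_eq_abs]
  have hι₂int : Integrable ι₂ μ := by
    refine Integrable.mono' (hGint.const_mul B) hι₂meas.aestronglyMeasurable ?_
    filter_upwards [hιbound ψ₂ hψ₂meas hψ₂bdd] with ω hω
    rwa [Real.norm_eq_abs]
  -- the key a.e. bound using translation invariance and Lipschitz log-density
  have hkey : ∀ᵐ ω ∂μ, ι₁ ω - ι₂ ω ≤ (Real.exp (L * h) - 1) * B * G ω := by
    have hexpnn : 0 ≤ Real.exp (L * h) - 1 := by
      have : (1:ℝ) = Real.exp 0 := Real.exp_zero.symm
      rw [this]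
      have := Real.exp_le_exp.2 (by positivity : (0:ℝ) ≤ L * h)
      linarith
    filter_upwards [haeint] with ω hgint
    set a : EuclideanSpace ℝ (Fin d) := h • clipUnit (Y ω) with ha
    have hna : ‖a‖ ≤ h := by
      rw [ha, norm_smul, Real.norm_of_nonneg hh.le]
      calc h * ‖clipUnit (Y ω)‖ ≤ h * 1 :=
            mul_le_mul_of_nonneg_left (clipUnit_norm_le _) hh.le
        _ = h := mul_one h
    -- translation
    have hshift : ι₁ ω = ∫ t, (inner ℝ (clipUnit (Y ω)) (piHat t) : ℝ) * g (t + a) (Y ω) := by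
      have htrans := integral_add_right_eq_self (μ := volume)
        (fun t => ψ₁ t (Y ω) * g t (Y ω)) a
      calc ι₁ ω = ∫ t, ψ₁ (t + a) (Y ω) * g (t + a) (Y ω) := htrans.symm
        _ = ∫ t, (inner ℝ (clipUnit (Y ω)) (piHat t) : ℝ) * g (t + a) (Y ω) := by
            congr 1
            funext t
            have hta : t + a - h • clipUnit (Y ω) = t := by
              rw [ha, add_sub_cancel_right]
            simp only [hψ₁, hta]
    -- integrability of the two integrands
    have hg2 : Integrable (fun t => g (t + a) (Y ω)) := hgint.comp_add_right a
    have hqmeas : Measurable (fun t : EuclideanSpace ℝ (Fin d) =>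
        (inner ℝ (clipUnit (Y ω)) (piHat t) : ℝ)) := measurable_const.inner hpiMeas
    have hA1 : Integrable (fun t => (inner ℝ (clipUnit (Y ω)) (piHat t) : ℝ) * g (t + a) (Y ω)) := by
      refine Integrable.mono' (hg2.const_mul B)
        ((hqmeas.mul ((hslicemeas (Y ω)).comp (measurable_add_const a))).aestronglyMeasurable)
        (ae_of_all _ fun t => ?_)
      rw [Real.norm_eq_abs, abs_mul, abs_of_pos (hgPos _ _)]
      exact mul_le_mul_of_nonneg_right (hψbound _ _) (hgPos _ _).le
    have hA2 : Integrable (fun t => (inner ℝ (clipUnit (Y ω)) (piHat t) : ℝ) * g t (Y ω)) := by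
      refine Integrable.mono' (hgint.const_mul B)
        ((hqmeas.mul (hslicemeas (Y ω))).aestronglyMeasurable)
        (ae_of_all _ fun t => ?_)
      rw [Real.norm_eq_abs, abs_mul, abs_of_pos (hgPos _ _)]
      exact mul_le_mul_of_nonneg_right (hψbound _ _) (hgPos _ _).le
    -- density increment bound
    have hgdiff : ∀ t, |g (t + a) (Y ω) - g t (Y ω)| ≤ (Real.exp (L * h) - 1) * g t (Y ω) := by
      intro t
      set u := Real.log (g (t + a) (Y ω)) - Real.log (g t (Y ω)) with hu
      have hule : |u| ≤ L * h := by
        refine (hgLip (Y ω) t (t + a)).trans ?_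
        rw [add_sub_cancel_left]
        exact mul_le_mul_of_nonneg_left hna hL.le
      have hgexp : g (t + a) (Y ω) = g t (Y ω) * Real.exp u := by
        rw [hu, Real.exp_sub, Real.exp_log (hgPos _ _), Real.exp_log (hgPos _ _)]
        rw [mul_div_cancel₀ _ (hgPos t (Y ω)).ne']
      have habs1 : |Real.exp u - 1| ≤ Real.exp |u| - 1 := by
        rw [abs_le]
        constructor
        · nlinarith [Real.add_one_le_exp u, Real.add_one_le_exp |u|, neg_abs_le u]
        · nlinarith [Real.exp_le_exp.2 (le_abs_self u)]
      have habs2 : Real.exp |u| ≤ Real.exp (L * h) := Real.exp_le_exp.2 hule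
      have hfac : g (t + a) (Y ω) - g t (Y ω) = g t (Y ω) * (Real.exp u - 1) := by
        rw [hgexp]; ring
      calc |g (t + a) (Y ω) - g t (Y ω)| = g t (Y ω) * |Real.exp u - 1| := by
            rw [hfac, abs_mul, abs_of_pos (hgPos _ _)]
        _ ≤ g t (Y ω) * (Real.exp (L * h) - 1) := by
            refine mul_le_mul_of_nonneg_left ?_ (hgPos _ _).le
            linarith
        _ = (Real.exp (L * h) - 1) * g t (Y ω) := mul_comm _ _
    -- pointwise bound on the difference of the integrands
    have hptdiff : ∀ t, (inner ℝ (clipUnit (Y ω)) (piHat t) : ℝ) * g (t + a) (Y ω)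
        - (inner ℝ (clipUnit (Y ω)) (piHat t) : ℝ) * g t (Y ω)
        ≤ (Real.exp (L * h) - 1) * B * g t (Y ω) := by
      intro t
      rw [← mul_sub]
      calc (inner ℝ (clipUnit (Y ω)) (piHat t) : ℝ) * (g (t + a) (Y ω) - g t (Y ω))
          ≤ |(inner ℝ (clipUnit (Y ω)) (piHat t) : ℝ) * (g (t + a) (Y ω) - g t (Y ω))| :=
            le_abs_self _
        _ = |(inner ℝ (clipUnit (Y ω)) (piHat t) : ℝ)| * |g (t + a) (Y ω) - g t (Y ω)| :=
            abs_mul _ _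
        _ ≤ B * ((Real.exp (L * h) - 1) * g t (Y ω)) := by
            refine mul_le_mul (hψbound _ _) (hgdiff t) (abs_nonneg _) hB
        _ = (Real.exp (L * h) - 1) * B * g t (Y ω) := by ring
    -- put it together
    have hι₂eq : ι₂ ω = ∫ t, (inner ℝ (clipUnit (Y ω)) (piHat t) : ℝ) * g t (Y ω) := rfl
    rw [hshift, hι₂eq, ← integral_sub hA1 hA2]
    calc ∫ t, ((inner ℝ (clipUnit (Y ω)) (piHat t) : ℝ) * g (t + a) (Y ω)
          - (inner ℝ (clipUnit (Y ω)) (piHat t) : ℝ) * g t (Y ω))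
        ≤ ∫ t, (Real.exp (L * h) - 1) * B * g t (Y ω) := by
          exact integral_mono (hA1.sub hA2) ((hgint.const_mul _)) (fun t => hptdiff t)
      _ = (Real.exp (L * h) - 1) * B * G ω := by rw [hG, integral_const_mul]
  -- conclude
  have step2 : ∫ ω, (ψ₁ (f (X ω)) (Y ω) - ψ₂ (f (X ω)) (Y ω)) ∂μ
      = ∫ ω, (ι₁ ω - ι₂ ω) ∂μ := by
    rw [integral_sub hψ₁int hψ₂int, hd₁, hd₂, integral_sub hι₁int hι₂int]
  have step3 : ∫ ω, (ι₁ ω - ι₂ ω) ∂μ ≤ ∫ ω, (Real.exp (L * h) - 1) * B * G ω ∂μ := by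
    refine integral_mono_ae (hι₁int.sub hι₂int) ?_ hkey
    simpa [mul_assoc] using (hGint.const_mul ((Real.exp (L*h) - 1) * B))
  have step4 : ∫ ω, (Real.exp (L * h) - 1) * B * G ω ∂μ = (Real.exp (L * h) - 1) * B := by
    rw [integral_const_mul, hGone, mul_one]
  -- final numeric bound
  have hLh1 : L * h ≤ 1 := by
    have := (lt_div_iff₀ hL).1 hhL
    nlinarith
  have hLh0 : 0 ≤ L * h := by positivity
  have hfin : (Real.exp (L * h) - 1) * B ≤ (Real.exp 1 - 1) * B * L * h := by
    have := exp_le_one_add_mul hLh0 hLh1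
    nlinarith [Real.exp_one_gt_d9]
  calc ∫ ω, I ω ∂μ ≤ ∫ ω, (ψ₁ (f (X ω)) (Y ω) - ψ₂ (f (X ω)) (Y ω)) ∂μ := step1
    _ = ∫ ω, (ι₁ ω - ι₂ ω) ∂μ := step2
    _ ≤ ∫ ω, (Real.exp (L * h) - 1) * B * G ω ∂μ := step3
    _ = (Real.exp (L * h) - 1) * B := step4
    _ ≤ (Real.exp 1 - 1) * B * L * h := hfin
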